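/- Let V be a finite set and E : V → V → Prop an acyclic directed edge relation, with coverage generating function P_{f,g}(p) = ∑_n N_n(f,g)·pⁿ and critical parameter p_c(f,g) = inf { p ∈ [0,1] : P_{f,g}(p) ≥ 1 } (set to 1 if this set is empty). Then for all f, h, g ∈ V, p_c(f,g) ≤ max( p_c(f,h), p_c(h,g) ). -/

import Mathlib

open scoped BigOperators

/-- A walk of length `n` from `f` to `g` in the directed graph `(V, E)`:
a function `w : Fin (n+1) → V` with `w 0 = f`, `w n = g`, and
`E (w i) (w (i+1))` for all `i < n`. -/
def IsWalk {V : Type*} (E : V → V → Prop) (n : ℕ) (f g : V)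
    (w : Fin (n + 1) → V) : Prop :=
  w 0 = f ∧ w (Fin.last n) = g ∧ ∀ i : Fin n, E (w i.castSucc) (w i.succ)

/-- `N_n(f,g)`: the number of walks of length `n` from `f` to `g`. -/
noncomputable def numWalks {V : Type*} (E : V → V → Prop) (n : ℕ) (f g : V) : ℕ :=
  Nat.card {w : Fin (n + 1) → V // IsWalk E n f g w}

/-- The coverage generating function `P_{f,g}(p) = ∑ₙ N_n(f,g) pⁿ`. -/
noncomputable def covGF {V : Type*} (E : V → V → Prop) (f g : V) (p : ℝ) : ℝ :=
  ∑' n : ℕ, (numWalks E n f g : ℝ) * p ^ n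

/-- The edge relation is acyclic: no walks of positive length from a vertex to itself. -/
def Acyclic {V : Type*} (E : V → V → Prop) : Prop :=
  ∀ f : V, ∀ n : ℕ, 1 ≤ n → numWalks E n f f = 0

/-- The critical parameter `p_c(f,g) = inf { p ∈ [0,1] : P_{f,g}(p) ≥ 1 }`,
equal to `1` when the set is empty (adjoining `1` to the set changes nothing
when it is nonempty, since the set is contained in `[0,1]`). -/
noncomputable def critParam {V : Type*} (E : V → V → Prop) (f g : V) : ℝ :=
  sInf ({p : ℝ | p ∈ Set.Icc (0 : ℝ) 1 ∧ 1 ≤ covGF E f g p} ∪ {1})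

/-- The coverage index `R_c(f,g) = 1 - p_c(f,g)`. -/
noncomputable def covIndex {V : Type*} (E : V → V → Prop) (f g : V) : ℝ :=
  1 - critParam E f g

lemma subwalk {V : Type*} {E : V → V → Prop} {n : ℕ} {f g : V} {w : Fin (n+1) → V}
    (hw : IsWalk E n f g w) (i j : ℕ) (hij : i ≤ j) (hj : j ≤ n) :
    IsWalk E (j - i) (w ⟨i, by omega⟩) (w ⟨j, by omega⟩)
      (fun k => w ⟨i + k.val, by omega⟩) := by
  obtain ⟨-, -, he⟩ := hw
  refine ⟨by simp, ?_, ?_⟩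
  · show w ⟨i + (j - i), by omega⟩ = w ⟨j, by omega⟩
    congr 1
    exact Fin.ext (by simp; omega)
  · intro k
    have hk : (k : ℕ) < j - i := k.isLt
    have := he ⟨i + k.val, by omega⟩
    convert this using 2 <;> rfl

-- no repeated vertex in a walk, in an acyclic graph

lemma no_repeat {V : Type*} [Fintype V] {E : V → V → Prop} (hE : Acyclic E)
    {n : ℕ} {f g : V} {w : Fin (n+1) → V} (hw : IsWalk E n f g w)
    (i j : ℕ) (hij : i < j) (hj : j ≤ n)
    (heq : w ⟨i, by omega⟩ = w ⟨j, by omega⟩) : False := by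
  have hsub := subwalk hw i j hij.le hj
  rw [← heq] at hsub
  have : numWalks E (j - i) (w ⟨i, by omega⟩) (w ⟨i, by omega⟩) ≠ 0 := by
    have : Nonempty {u : Fin (j - i + 1) → V // IsWalk E (j-i) (w ⟨i, by omega⟩) (w ⟨i, by omega⟩) u} :=
      ⟨⟨_, hsub⟩⟩
    simpa [numWalks] using Nat.card_pos.ne'
  exact this (hE _ _ (by omega))

lemma numWalks_vanish {V : Type*} [Fintype V] {E : V → V → Prop} (hE : Acyclic E)
    {n : ℕ} (hn : Fintype.card V ≤ n) (f g : V) : numWalks E n f g = 0 := by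
  rw [numWalks, Nat.card_eq_zero]
  left
  rw [isEmpty_iff]
  rintro ⟨w, hw⟩
  obtain ⟨a, b, hab, heq⟩ := Fintype.exists_ne_map_eq_of_card_lt w (by simp; omega)
  rcases Ne.lt_or_gt hab with hlt | hlt
  · exact no_repeat hE hw a b hlt (by omega) (by simpa using heq)
  · exact no_repeat hE hw b a hlt (by omega) (by simpa using heq.symm)

def glue {V : Type*} (m k : ℕ) (hm : m ≤ k) (w1 : Fin (m+1) → V)
    (w2 : Fin (k-m+1) → V) : Fin (k+1) → V :=
  fun i => if hi : i.val ≤ m then w1 ⟨i.val, by omega⟩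
    else w2 ⟨i.val - m, by have := i.isLt; omega⟩

lemma glue_isWalk {V : Type*} {E : V → V → Prop} {k m : ℕ} (f h g : V) (hm : m ≤ k)
    {w1 : Fin (m+1) → V} {w2 : Fin (k-m+1) → V}
    (hw1 : IsWalk E m f h w1) (hw2 : IsWalk E (k-m) h g w2) :
    IsWalk E k f g (glue m k hm w1 w2) := by
  obtain ⟨h1a, h1b, h1c⟩ := hw1
  obtain ⟨h2a, h2b, h2c⟩ := hw2
  refine ⟨?_, ?_, ?_⟩
  · simpa [glue] using h1a
  · by_cases hc : k ≤ m
    · have hkm : m = k := le_antisymm hm hc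
      subst hkm
      have : w2 (Fin.last (m - m)) = w2 0 := by congr 1; ext; simp
      rw [this, h2a] at h2b
      simpa [glue, Fin.last, ← h2b] using h1b
    · have e : glue m k hm w1 w2 (Fin.last k) = w2 ⟨k - m, by omega⟩ := by
        simp only [glue, Fin.last]
        rw [dif_neg (by omega)]
      rw [e]
      have : (⟨k - m, by omega⟩ : Fin (k - m + 1)) = Fin.last (k - m) := by
        ext; simp [Fin.last]
      rw [this, h2b]
  · intro i
    have hik : (i : ℕ) < k := i.isLt
    have ecs : (i.castSucc : ℕ) = (i : ℕ) := rfl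
    have esu : (i.succ : ℕ) = (i : ℕ) + 1 := rfl
    by_cases h1 : (i : ℕ) + 1 ≤ m
    · have := h1c ⟨i, by omega⟩
      have e1 : glue m k hm w1 w2 i.castSucc = w1 ⟨i, by omega⟩ := by
        simp only [glue]; rw [dif_pos (by omega)]; rfl
      have e2 : glue m k hm w1 w2 i.succ = w1 ⟨i + 1, by omega⟩ := by
        simp only [glue]; rw [dif_pos (by rw [esu]; omega)]; rfl
      rw [e1, e2]
      convert this using 2 <;> rfl
    · by_cases h2 : (i : ℕ) ≤ m
      · have him : (i : ℕ) = m := by omega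
        have hkm : (1 : ℕ) ≤ k - m := by omega
        have := h2c ⟨0, by omega⟩
        have e1 : glue m k hm w1 w2 i.castSucc = w1 ⟨i, by omega⟩ := by
          simp only [glue]; rw [dif_pos (by omega)]; rfl
        have e2 : glue m k hm w1 w2 i.succ = w2 ⟨1, by omega⟩ := by
          simp only [glue]; rw [dif_neg (by rw [esu]; omega)]
          congr 1; ext; simp [Fin.val_succ]; omega
        rw [e1, e2]
        have ew1 : w1 ⟨i, by omega⟩ = h := by
          have : (⟨(i:ℕ), by omega⟩ : Fin (m+1)) = Fin.last m := by ext; simp [Fin.last, him]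
          rw [this, h1b]
        have ew2 : (⟨0, by omega⟩ : Fin (k - m)).castSucc = (0 : Fin (k - m + 1)) := by
          ext; simp
        rw [ew2, h2a] at this
        rw [ew1]
        convert this using 2 <;> rfl
      · have := h2c ⟨(i : ℕ) - m, by omega⟩
        have e1 : glue m k hm w1 w2 i.castSucc = w2 ⟨(i:ℕ) - m, by omega⟩ := by
          simp only [glue]; rw [dif_neg (by omega)]; rfl
        have e2 : glue m k hm w1 w2 i.succ = w2 ⟨(i:ℕ) + 1 - m, by omega⟩ := by
          simp only [glue]; rw [dif_neg (by rw [esu]; omega)]; rfl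
        rw [e1, e2]
        convert this using 2 <;> ext <;> simp [Fin.succ, Fin.castSucc] <;> omega

lemma walk_inj_at {V : Type*} [Fintype V] {E : V → V → Prop} (hE : Acyclic E)
    {k : ℕ} {f g : V} {w : Fin (k+1) → V} (hw : IsWalk E k f g w)
    (i j : ℕ) (hi : i ≤ k) (hj : j ≤ k)
    (he : w ⟨i, by omega⟩ = w ⟨j, by omega⟩) : i = j := by
  rcases lt_trichotomy i j with hlt | heq | hlt
  · exact absurd (no_repeat hE hw i j hlt hj he) (by simp)
  · exact heq
  · exact absurd (no_repeat hE hw j i hlt hi he.symm) (by simp)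

lemma sum_concat_le {V : Type*} [Fintype V] {E : V → V → Prop} (hE : Acyclic E)
    (f h g : V) (k : ℕ) :
    ∑ m ∈ Finset.range (k+1), numWalks E m f h * numWalks E (k-m) h g
      ≤ numWalks E k f g := by
  classical
  set T := Σ m : Fin (k+1), {w : Fin (m.val+1) → V // IsWalk E m.val f h w} ×
      {w : Fin (k - m.val + 1) → V // IsWalk E (k - m.val) h g w} with hT
  have hmle : ∀ m : Fin (k+1), m.val ≤ k := fun m => by omega
  let Φ : T → {w : Fin (k+1) → V // IsWalk E k f g w} := fun x =>
    ⟨glue x.1.val k (hmle x.1) x.2.1.1 x.2.2.1,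
      glue_isWalk f h g (hmle x.1) x.2.1.2 x.2.2.2⟩
  have key : ∀ (m : ℕ) (hm : m ≤ k) (w1 : Fin (m+1) → V) (w2 : Fin (k-m+1) → V)
      (hw1 : IsWalk E m f h w1), glue m k hm w1 w2 ⟨m, by omega⟩ = h := by
    intro m hm w1 w2 hw1
    simp only [glue]
    rw [dif_pos le_rfl]
    have : (⟨m, by omega⟩ : Fin (m+1)) = Fin.last m := by ext; simp [Fin.last]
    rw [this, hw1.2.1]
  have hinj : Function.Injective Φ := by
    rintro ⟨m, ⟨u1, hu1⟩, ⟨u2, hu2⟩⟩ ⟨m', ⟨v1, hv1⟩, ⟨v2, hv2⟩⟩ heq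
    have hgl : glue m.val k (hmle m) u1 u2 = glue m'.val k (hmle m') v1 v2 :=
      congrArg Subtype.val heq
    have hmm : m'.val = m.val := by
      refine (walk_inj_at hE (glue_isWalk f h g (hmle m) hu1 hu2) m.val m'.val
        (hmle m) (hmle m') ?_).symm
      rw [key m.val (hmle m) u1 u2 hu1, hgl, key m'.val (hmle m') v1 v2 hv1]
    have hm2 : m = m' := (Fin.ext hmm).symm
    subst hm2
    have h1 : u1 = v1 := by
      funext i
      have hi : (i : ℕ) ≤ m.val := by omega
      have := congrFun hgl ⟨i.val, by omega⟩
      simp only [glue] at this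
      rw [dif_pos hi, dif_pos hi] at this
      simpa using this
    have h2 : u2 = v2 := by
      funext i
      have hi : (i : ℕ) ≤ k - m.val := by omega
      rcases Nat.eq_zero_or_pos i.val with hz | hpos
      · have : i = 0 := Fin.ext (by simpa using hz)
        rw [this, hu2.1, hv2.1]
      · have := congrFun hgl ⟨m.val + i.val, by omega⟩
        simp only [glue] at this
        rw [dif_neg (by simp only [Fin.val_mk, not_le]; omega), dif_neg (by simp only [Fin.val_mk, not_le]; omega)] at this
        have he : (⟨(⟨m.val + i.val, by omega⟩ : Fin (k+1)).val - m.val, by simp; omega⟩ :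
            Fin (k - m.val + 1)) = i := Fin.ext (by simp)
        rwa [he] at this
    simp [h1, h2]
  haveI : ∀ m : Fin (k+1), Fintype {w : Fin (m.val+1) → V // IsWalk E m.val f h w} :=
    fun m => Fintype.ofFinite _
  haveI : ∀ m : Fin (k+1), Fintype {w : Fin (k - m.val+1) → V // IsWalk E (k - m.val) h g w} :=
    fun m => Fintype.ofFinite _
  have hcard : Nat.card T
      = ∑ m ∈ Finset.range (k+1), numWalks E m f h * numWalks E (k-m) h g := by
    rw [Nat.card_eq_fintype_card, Fintype.card_sigma, ← Fin.sum_univ_eq_sum_range]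
    refine Finset.sum_congr rfl fun m _ => ?_
    simp [numWalks, Nat.card_eq_fintype_card]
  rw [← hcard]
  exact Nat.card_le_card_of_injective Φ hinj

lemma covGF_eq_sum {V : Type*} [Fintype V] {E : V → V → Prop} (hE : Acyclic E)
    (f g : V) (p : ℝ) {M : ℕ} (hM : Fintype.card V ≤ M) :
    covGF E f g p = ∑ n ∈ Finset.range M, (numWalks E n f g : ℝ) * p ^ n := by
  rw [covGF]
  apply tsum_eq_sum
  intro n hn
  rw [Finset.mem_range, not_lt] at hn
  rw [numWalks_vanish hE (hM.trans hn)]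
  simp

lemma covGF_mono {V : Type*} [Fintype V] {E : V → V → Prop} (hE : Acyclic E)
    (f g : V) {s p : ℝ} (hs : 0 ≤ s) (hsp : s ≤ p) :
    covGF E f g s ≤ covGF E f g p := by
  rw [covGF_eq_sum hE f g s le_rfl, covGF_eq_sum hE f g p le_rfl]
  refine Finset.sum_le_sum fun n _ => ?_
  exact mul_le_mul_of_nonneg_left (pow_le_pow_left₀ hs hsp n) (by positivity)

lemma covGF_mul_le {V : Type*} [Fintype V] {E : V → V → Prop} (hE : Acyclic E)
    (f h g : V) {p : ℝ} (hp : 0 ≤ p) :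
    covGF E f h p * covGF E h g p ≤ covGF E f g p := by
  classical
  set N := Fintype.card V with hN
  rw [covGF_eq_sum hE f h p le_rfl, covGF_eq_sum hE h g p le_rfl,
    covGF_eq_sum hE f g p (show N ≤ 2 * N by omega), Finset.sum_mul_sum]
  rw [← Finset.sum_product']
  rw [← Finset.sum_fiberwise_of_maps_to (g := fun x : ℕ × ℕ => x.1 + x.2)
    (t := Finset.range (2 * N)) (fun x hx => by
      simp only [Finset.mem_product, Finset.mem_range] at hx
      simp only [Finset.mem_range]; omega)]
  refine Finset.sum_le_sum fun k _ => ?_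
  have step1 : ∑ x ∈ (Finset.range N ×ˢ Finset.range N).filter
        (fun x : ℕ × ℕ => x.1 + x.2 = k),
      (numWalks E x.1 f h : ℝ) * p ^ x.1 * ((numWalks E x.2 h g : ℝ) * p ^ x.2)
      = (∑ x ∈ (Finset.range N ×ˢ Finset.range N).filter
        (fun x : ℕ × ℕ => x.1 + x.2 = k),
        (numWalks E x.1 f h : ℝ) * (numWalks E x.2 h g : ℝ)) * p ^ k := by
    rw [Finset.sum_mul]
    refine Finset.sum_congr rfl fun x hx => ?_
    simp only [Finset.mem_filter] at hx
    rw [← hx.2, pow_add]; ring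
  rw [step1]
  have step2 : ∑ x ∈ (Finset.range N ×ˢ Finset.range N).filter
        (fun x : ℕ × ℕ => x.1 + x.2 = k),
      numWalks E x.1 f h * numWalks E x.2 h g
      ≤ numWalks E k f g := by
    refine le_trans ?_ (sum_concat_le hE f h g k)
    have himg : ∑ x ∈ (Finset.range N ×ˢ Finset.range N).filter
          (fun x : ℕ × ℕ => x.1 + x.2 = k),
        numWalks E x.1 f h * numWalks E x.2 h g
        = ∑ m ∈ ((Finset.range N ×ˢ Finset.range N).filter
          (fun x : ℕ × ℕ => x.1 + x.2 = k)).image Prod.fst,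
          numWalks E m f h * numWalks E (k - m) h g := by
      rw [Finset.sum_image (by
        intro x hx y hy hxy
        simp only [Finset.mem_coe, Finset.mem_filter] at hx hy
        ext
        · exact hxy
        · omega)]
      refine Finset.sum_congr rfl fun x hx => ?_
      simp only [Finset.mem_filter] at hx
      rw [show x.2 = k - x.1 by omega]
    rw [himg]
    refine Finset.sum_le_sum_of_subset ?_
    intro m hm
    simp only [Finset.mem_image, Finset.mem_filter] at hm
    obtain ⟨x, hx, rfl⟩ := hm
    simp only [Finset.mem_range]
    omega
  calc (∑ x ∈ (Finset.range N ×ˢ Finset.range N).filter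
        (fun x : ℕ × ℕ => x.1 + x.2 = k),
        (numWalks E x.1 f h : ℝ) * (numWalks E x.2 h g : ℝ)) * p ^ k
      ≤ (numWalks E k f g : ℝ) * p ^ k := by
        refine mul_le_mul_of_nonneg_right ?_ (by positivity)
        calc (∑ x ∈ (Finset.range N ×ˢ Finset.range N).filter
              (fun x : ℕ × ℕ => x.1 + x.2 = k),
            (numWalks E x.1 f h : ℝ) * (numWalks E x.2 h g : ℝ))
            = ((∑ x ∈ (Finset.range N ×ˢ Finset.range N).filter
              (fun x : ℕ × ℕ => x.1 + x.2 = k),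
              numWalks E x.1 f h * numWalks E x.2 h g : ℕ) : ℝ) := by
              push_cast; rfl
          _ ≤ ((numWalks E k f g : ℕ) : ℝ) := by exact_mod_cast step2

lemma critSet_bdd {V : Type*} (E : V → V → Prop) (f g : V) :
    BddBelow ({p : ℝ | p ∈ Set.Icc (0 : ℝ) 1 ∧ 1 ≤ covGF E f g p} ∪ {1}) := by
  refine ⟨0, ?_⟩
  rintro p (⟨⟨h0, _⟩, _⟩ | rfl)
  · exact h0
  · norm_num

lemma critSet_ne {V : Type*} (E : V → V → Prop) (f g : V) :
    ({p : ℝ | p ∈ Set.Icc (0 : ℝ) 1 ∧ 1 ≤ covGF E f g p} ∪ {1}).Nonempty :=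
  ⟨1, Or.inr rfl⟩

lemma critParam_le_one {V : Type*} (E : V → V → Prop) (f g : V) :
    critParam E f g ≤ 1 :=
  csInf_le (critSet_bdd E f g) (Or.inr rfl)

lemma critParam_nonneg {V : Type*} (E : V → V → Prop) (f g : V) :
    0 ≤ critParam E f g := by
  refine le_csInf (critSet_ne E f g) ?_
  rintro p (⟨⟨h0, _⟩, _⟩ | rfl)
  · exact h0
  · norm_num

lemma covGF_ge_one_of_lt {V : Type*} [Fintype V] {E : V → V → Prop} (hE : Acyclic E)
    (f g : V) {p : ℝ} (hlt : critParam E f g < p) (hp1 : p ≤ 1) :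
    1 ≤ covGF E f g p := by
  obtain ⟨s, hs, hsp⟩ := exists_lt_of_csInf_lt (critSet_ne E f g) hlt
  rcases hs with ⟨⟨hs0, _⟩, hscov⟩ | rfl
  · exact hscov.trans (covGF_mono hE f g hs0 hsp.le)
  · exact absurd (hsp.trans_le hp1) (lt_irrefl 1)

/-- `p_c(f,g) ≤ max (p_c(f,h), p_c(h,g))`. -/
theorem stmt_3 {V : Type*} [Fintype V] (E : V → V → Prop) (hE : Acyclic E)
    (f h g : V) :
    critParam E f g ≤ max (critParam E f h) (critParam E h g) := by
  set q := max (critParam E f h) (critParam E h g) with hq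
  have hq0 : 0 ≤ q := le_trans (critParam_nonneg E f h) (le_max_left _ _)
  refine le_of_forall_pos_le_add fun ε hε => ?_
  by_cases hle : q + ε ≤ 1
  · set p := q + ε with hpdef
    have hp0 : 0 ≤ p := by positivity
    have h1 : 1 ≤ covGF E f h p :=
      covGF_ge_one_of_lt hE f h (lt_of_le_of_lt (le_max_left _ _) (by linarith)) hle
    have h2 : 1 ≤ covGF E h g p :=
      covGF_ge_one_of_lt hE h g (lt_of_le_of_lt (le_max_right _ _) (by linarith)) hle
    have h3 : 1 ≤ covGF E f g p := by
      have := covGF_mul_le hE f h g hp0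
      nlinarith
    exact csInf_le (critSet_bdd E f g) (Or.inl ⟨⟨hp0, hle⟩, h3⟩)
  · exact (critParam_le_one E f g).trans (by linarith)
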